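/- For the n-dimensional Moler matrix A(n) and any n ≥ 1, λ_min(A(n)) ≤ 3n/(4^n - 1), where λ_min denotes the smallest eigenvalue. -/

import Mathlib

open Matrix

noncomputable def molerMat (n : ℕ) : Matrix (Fin n) (Fin n) ℝ :=
  fun i j => if i = j then ((i : ℕ) + 1 : ℝ) else (((min (i : ℕ) (j : ℕ) : ℝ) + 1) - 2)

noncomputable def lamMin (n : ℕ) : ℝ :=
  sInf {r : ℝ | ∃ x : Fin n → ℝ, x ⬝ᵥ x = 1 ∧ r = x ⬝ᵥ (molerMat n).mulVec x}

open Finset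

noncomputable def molerL (k i : ℕ) : ℝ := if i = k then 1 else if k < i then -1 else 0

lemma molerL_colsum (n k : ℕ) (hk : k < n) :
    ∑ i ∈ range n, (2:ℝ)^(n-1-i) * molerL k i = 1 := by
  have hico : ∀ (a b : ℕ), ∑ i ∈ Finset.Ico a b, (2:ℝ)^(b-1-i) = 2^(b-a) - 1 := by
    intro a b
    rw [Finset.sum_Ico_eq_sum_range]
    have h2 : ∀ i ∈ range (b-a), (2:ℝ)^(b-1-(a+i)) = (2:ℝ)^((b-a)-1-i) := by
      intro i hi; rw [Finset.mem_range] at hi; congr 1; omega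
    rw [Finset.sum_congr rfl h2,
      Finset.sum_range_reflect (fun j => (2:ℝ)^j) (b-a), geom_sum_eq (by norm_num)]; ring
  rw [← Finset.sum_range_add_sum_Ico _ (Nat.succ_le_of_lt hk)]
  have e1 : ∑ i ∈ range (k+1), (2:ℝ)^(n-1-i) * molerL k i
      = ∑ i ∈ range (k+1), (if i = k then (2:ℝ)^(n-1-i) else 0) := by
    refine Finset.sum_congr rfl fun i hi => ?_
    rw [Finset.mem_range] at hi
    unfold molerL
    by_cases h : i = k
    · simp [h]
    · have : ¬ k < i := by omega
      simp [h, this]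
  have e2 : ∑ i ∈ Finset.Ico (k+1) n, (2:ℝ)^(n-1-i) * molerL k i
      = ∑ i ∈ Finset.Ico (k+1) n, (-(2:ℝ)^(n-1-i)) := by
    refine Finset.sum_congr rfl fun i hi => ?_
    rw [Finset.mem_Ico] at hi
    unfold molerL
    have h1 : i ≠ k := by omega
    have h2 : k < i := by omega
    simp [h1, h2]
  rw [e1, e2, Finset.sum_ite_eq' (range (k+1)) k (fun i => (2:ℝ)^(n-1-i)),
    Finset.sum_neg_distrib, hico (k+1) n]
  simp only [Finset.mem_range, lt_add_iff_pos_right, Nat.lt_irrefl]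
  have h3 : n - (k+1) = n - 1 - k := by omega
  rw [if_pos (by omega : 0 < 1), h3]
  ring

lemma molerL_rowsum (n i j : ℕ) (hij : i ≤ j) (hj : j < n) :
    ∑ k ∈ range n, molerL k i * molerL k j = (i:ℝ) + (if j = i then 1 else -1) := by
  have hpt : ∀ k ∈ range n, molerL k i * molerL k j
      = (if k < i then (1:ℝ) else 0) + (if k = i then (if j = i then (1:ℝ) else -1) else 0) := by
    intro k _
    unfold molerL
    split_ifs <;> first | (exfalso; omega) | norm_num
  rw [Finset.sum_congr rfl hpt, Finset.sum_add_distrib,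
    Finset.sum_ite_eq' (range n) i (fun _ => (if j = i then (1:ℝ) else -1)),
    if_pos (Finset.mem_range.mpr (by omega)), Finset.sum_ite, Finset.sum_const,
    Finset.sum_const, show (range n).filter (fun k => k < i) = range i from by
      ext k; simp [Finset.mem_range]; omega]
  simp

lemma moler_fact (n : ℕ) (i j : Fin n) :
    molerMat n i j = ∑ k ∈ range n, molerL k (i:ℕ) * molerL k (j:ℕ) := by
  have key : ∀ a b : Fin n, (a:ℕ) ≤ (b:ℕ) →
      molerMat n a b = ∑ k ∈ range n, molerL k (a:ℕ) * molerL k (b:ℕ) := by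
    intro a b hab
    rw [molerL_rowsum n a b hab b.isLt]
    unfold molerMat
    by_cases h : a = b
    · simp [h]
    · rw [if_neg h, if_neg (show ¬(b:ℕ) = (a:ℕ) from fun hc => h (Fin.ext hc.symm)),
        min_eq_left (show ((a:ℕ):ℝ) ≤ ((b:ℕ):ℝ) by exact_mod_cast hab)]
      ring
  rcases le_total (i:ℕ) (j:ℕ) with h | h
  · exact key i j h
  · rw [show molerMat n i j = molerMat n j i from by
        unfold molerMat
        by_cases hij : i = j
        · simp [hij]
        · rw [if_neg hij, if_neg (fun hc => hij hc.symm), min_comm (((i:ℕ):ℝ)) (((j:ℕ):ℝ))],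
      key j i h]
    exact Finset.sum_congr rfl fun k _ => mul_comm _ _

theorem moler_lamMin_le (n : ℕ) (hn : 1 ≤ n) :
    lamMin n ≤ 3 * n / (4 ^ n - 1) := by
  have h4 : (1:ℝ) < 4 ^ n := one_lt_pow₀ (by norm_num) (by omega)
  have hpos : (0:ℝ) < 4 ^ n - 1 := by linarith
  set c : ℝ := Real.sqrt (3 / (4 ^ n - 1)) with hc
  have hc2 : c ^ 2 = 3 / (4 ^ n - 1) := Real.sq_sqrt (by positivity)
  set x : Fin n → ℝ := fun i => c * 2 ^ (n - 1 - (i:ℕ)) with hxdef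
  have hxsq : ∀ i : Fin n, x i * x i = c ^ 2 * (4:ℝ) ^ (n - 1 - (i:ℕ)) := by
    intro i
    simp only [hxdef]
    rw [show (4:ℝ) = 2 * 2 by norm_num, mul_pow]
    ring
  have hxx : x ⬝ᵥ x = 1 := by
    simp only [dotProduct]
    rw [Finset.sum_congr rfl (fun i _ => hxsq i),
      Fin.sum_univ_eq_sum_range (fun m => c ^ 2 * (4:ℝ) ^ (n - 1 - m)) n,
      ← Finset.mul_sum,
      Finset.sum_range_reflect (fun j => (4:ℝ)^j) n, geom_sum_eq (by norm_num), hc2]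
    field_simp
    norm_num
  have hs : ∀ k : Fin n, ∑ i : Fin n, x i * molerL (k:ℕ) (i:ℕ) = c := by
    intro k
    have : ∀ i : Fin n, x i * molerL (k:ℕ) (i:ℕ)
        = c * ((2:ℝ) ^ (n - 1 - (i:ℕ)) * molerL (k:ℕ) (i:ℕ)) := by
      intro i; simp only [hxdef]; ring
    rw [Finset.sum_congr rfl (fun i _ => this i),
      Fin.sum_univ_eq_sum_range (fun m => c * ((2:ℝ) ^ (n - 1 - m) * molerL (k:ℕ) m)) n,
      ← Finset.mul_sum, molerL_colsum n k k.isLt, mul_one]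
  have hmain : x ⬝ᵥ (molerMat n).mulVec x = n * c ^ 2 := by
    calc x ⬝ᵥ (molerMat n).mulVec x
        = ∑ i : Fin n, ∑ j : Fin n, ∑ k ∈ range n,
            (x i * molerL k (i:ℕ)) * (x j * molerL k (j:ℕ)) := by
          simp only [dotProduct, mulVec, Finset.mul_sum]
          refine Finset.sum_congr rfl fun i _ => ?_
          refine Finset.sum_congr rfl fun j _ => ?_
          rw [moler_fact n i j, Finset.sum_mul, Finset.mul_sum]
          exact Finset.sum_congr rfl fun k _ => by ring
      _ = ∑ k ∈ range n, ∑ i : Fin n, ∑ j : Fin n,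
            (x i * molerL k (i:ℕ)) * (x j * molerL k (j:ℕ)) := by
          rw [Finset.sum_congr rfl (fun i (_ : i ∈ (Finset.univ : Finset (Fin n))) =>
            Finset.sum_comm), Finset.sum_comm]
      _ = ∑ k ∈ range n, (∑ i : Fin n, x i * molerL k (i:ℕ))
            * (∑ j : Fin n, x j * molerL k (j:ℕ)) := by
          refine Finset.sum_congr rfl fun k _ => ?_
          rw [Finset.sum_mul_sum]
      _ = ∑ k ∈ range n, c * c := by
          refine Finset.sum_congr rfl fun k _ => ?_
          rw [hs ⟨k, Finset.mem_range.mp ‹k ∈ range n›⟩]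
      _ = n * c ^ 2 := by
          rw [Finset.sum_const, Finset.card_range]; ring
  have hval : x ⬝ᵥ (molerMat n).mulVec x = 3 * n / (4 ^ n - 1) := by
    rw [hmain, hc2]; field_simp
  have hmem : (3 * (n:ℝ) / (4 ^ n - 1)) ∈
      {r : ℝ | ∃ y : Fin n → ℝ, y ⬝ᵥ y = 1 ∧ r = y ⬝ᵥ (molerMat n).mulVec y} :=
    ⟨x, hxx, hval.symm⟩
  have hbdd : BddBelow {r : ℝ | ∃ y : Fin n → ℝ,
      y ⬝ᵥ y = 1 ∧ r = y ⬝ᵥ (molerMat n).mulVec y} := by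
    refine ⟨-(∑ i : Fin n, ∑ j : Fin n, |molerMat n i j|), ?_⟩
    rintro r ⟨y, hy, rfl⟩
    simp only [dotProduct] at hy
    have hyb : ∀ i, |y i| ≤ 1 := by
      intro i
      rw [abs_le_one_iff_mul_self_le_one]
      calc y i * y i ≤ ∑ j, y j * y j :=
            Finset.single_le_sum (fun j _ => mul_self_nonneg (y j)) (Finset.mem_univ i)
        _ = 1 := hy
    have expand : y ⬝ᵥ (molerMat n).mulVec y
        = ∑ i : Fin n, ∑ j : Fin n, y i * (molerMat n i j * y j) := by
      simp only [dotProduct, mulVec, Finset.mul_sum]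
    rw [expand]
    rw [show -(∑ i : Fin n, ∑ j : Fin n, |molerMat n i j|)
        = ∑ i : Fin n, ∑ j : Fin n, -|molerMat n i j| by simp]
    refine Finset.sum_le_sum fun i _ => Finset.sum_le_sum fun j _ => ?_
    have h1 : |y i * (molerMat n i j * y j)| ≤ |molerMat n i j| := by
      rw [abs_mul, abs_mul]
      have h2 : |y i| * |y j| ≤ 1 := by
        nlinarith [hyb i, hyb j, abs_nonneg (y i), abs_nonneg (y j)]
      calc |y i| * (|molerMat n i j| * |y j|) = (|y i| * |y j|) * |molerMat n i j| := by ring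
        _ ≤ 1 * |molerMat n i j| := mul_le_mul_of_nonneg_right h2 (abs_nonneg _)
        _ = |molerMat n i j| := one_mul _
    linarith [neg_abs_le (y i * (molerMat n i j * y j))]
  exact csInf_le hbdd hmem
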